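/- Let δ, R, G be real numbers with δR > 0 and 2δR ≤ G, set C = G²/(2δR), and let (a_k)_{k≥0} be a sequence of nonnegative real numbers with a_0 ≤ C such that a_{k+1}² ≤ a_k² − 2δR·a_k + G² for every k ≥ 0. Then a_k ≤ C for every k ≥ 0. -/

import Mathlib

/-- Induction lemma for the constant-step-size Frank–Wolfe analysis:
if `a_{k+1}² ≤ a_k² − 2δR·a_k + G²` and `a_0 ≤ C = G²/(2δR)`, then `a_k ≤ C`
for every `k`. -/
theorem stmt_4 (δ R G : ℝ) (hδR : 0 < δ * R) (hG : 2 * δ * R ≤ G)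
    (a : ℕ → ℝ) (ha : ∀ k, 0 ≤ a k)
    (hinit : a 0 ≤ G ^ 2 / (2 * δ * R))
    (hrec : ∀ k, a (k + 1) ^ 2 ≤ a k ^ 2 - 2 * δ * R * a k + G ^ 2) :
    ∀ k, a k ≤ G ^ 2 / (2 * δ * R) := by
  have h2 : 0 < 2 * δ * R := by nlinarith
  set C := G ^ 2 / (2 * δ * R) with hCdef
  have hCeq : 2 * δ * R * C = G ^ 2 := by
    rw [hCdef]; exact mul_div_cancel₀ _ h2.ne'
  have hGC : G ≤ C := by
    nlinarith [sq_nonneg (G - 2 * δ * R)]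
  have hCnn : 0 ≤ C := by positivity
  intro k
  induction k with
  | zero => exact hinit
  | succ n ih =>
    have hrecn := hrec n
    -- a(n+1)^2 ≤ a n * C - 2δR a n + G^2 ≤ C^2
    have key : a (n + 1) ^ 2 ≤ C ^ 2 := by
      nlinarith [ha n, mul_le_mul_of_nonneg_left ih (ha n)]
    nlinarith [ha (n + 1)]
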